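/- Let μ₁, μ₂ > 0 and a₁, a₂, b₁, b₂ > 0, and let t₀ ∈ [0, π/2] be a maximizer of Φ(t) = μ₁a₁(t)^d + μ₂a₂(t)^d over [0, π/2], where a_i(t) = a_i cos t + b_i sin t. Set r_j(t) = μ₁ a₁(t)^{d−j} b₁(t)^j + μ₂ a₂(t)^{d−j} b₂(t)^j with b_i(t) = b_i cos t − a_i sin t. Then r₁(t₀) = 0, and either r_j(t₀) ≥ 0 for all j = 0,...,d, or r_j(t₀) ≥ 0 for all even j and r_j(t₀) ≤ 0 for all odd j. -/

import Mathlib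

open Real

/-- Core algebraic lemma under the assumption `0 ≤ B₁`. -/
lemma key_alg (d : ℕ) (hd : 1 ≤ d) (μ₁ μ₂ A₁ A₂ B₁ B₂ : ℝ)
    (hμ₁ : 0 < μ₁) (hμ₂ : 0 < μ₂) (hA₁ : 0 < A₁) (hA₂ : 0 < A₂) (hB₁ : 0 ≤ B₁)
    (h : μ₁ * A₁ ^ (d - 1) * B₁ + μ₂ * A₂ ^ (d - 1) * B₂ = 0) :
    (∀ j ≤ d, 0 ≤ μ₁ * A₁ ^ (d - j) * B₁ ^ j + μ₂ * A₂ ^ (d - j) * B₂ ^ j) ∨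
    (∀ j ≤ d,
      (Even j → 0 ≤ μ₁ * A₁ ^ (d - j) * B₁ ^ j + μ₂ * A₂ ^ (d - j) * B₂ ^ j) ∧
      (Odd j → μ₁ * A₁ ^ (d - j) * B₁ ^ j + μ₂ * A₂ ^ (d - j) * B₂ ^ j ≤ 0)) := by
  have hB₂ : B₂ ≤ 0 := by
    have h2 : μ₂ * A₂ ^ (d - 1) * B₂ = -(μ₁ * A₁ ^ (d - 1) * B₁) := by linarith
    have hpos : 0 < μ₂ * A₂ ^ (d - 1) := by positivity
    nlinarith [mul_nonneg (mul_nonneg hμ₁.le (pow_nonneg hA₁.le (d-1))) hB₁]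
  set x := B₁ / A₁ with hx
  set y := B₂ / A₂ with hy
  have hx0 : 0 ≤ x := div_nonneg hB₁ hA₁.le
  have hy0 : -y ≥ 0 := by
    have := div_nonpos_of_nonpos_of_nonneg hB₂ hA₂.le
    linarith
  set C := μ₁ * A₁ ^ (d - 1) * B₁ with hC
  have hC0 : 0 ≤ C := by positivity
  -- key identity for 1 ≤ j ≤ d
  have hid : ∀ j, 1 ≤ j → j ≤ d →
      μ₁ * A₁ ^ (d - j) * B₁ ^ j + μ₂ * A₂ ^ (d - j) * B₂ ^ j
        = C * (x ^ (j - 1) - y ^ (j - 1)) := by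
    intro j hj1 hjd
    obtain ⟨k, rfl⟩ := Nat.exists_eq_add_of_le hj1
    obtain ⟨e, he⟩ := Nat.exists_eq_add_of_le hjd
    have hdk : d - (1 + k) = e := by omega
    have hd1 : d - 1 = e + k := by omega
    have hk1 : 1 + k - 1 = k := by omega
    have hA₁' : A₁ ≠ 0 := hA₁.ne'
    have hA₂' : A₂ ≠ 0 := hA₂.ne'
    have h2 : μ₂ * A₂ ^ (e + k) * B₂ = -C := by rw [hC, ← hd1]; linarith
    have hCe : C = μ₁ * A₁ ^ (e + k) * B₁ := by rw [hC, hd1]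
    rw [hdk, hk1, hx, hy]
    have e1 : μ₁ * A₁ ^ e * B₁ ^ (1 + k) = (μ₁ * A₁ ^ (e + k) * B₁) * (B₁ / A₁) ^ k := by
      have hk : A₁ ^ k * (B₁ / A₁) ^ k = B₁ ^ k := by rw [← mul_pow, mul_div_cancel₀ _ hA₁']
      rw [show B₁ ^ (1 + k) = B₁ * (A₁ ^ k * (B₁ / A₁) ^ k) by rw [hk, pow_add, pow_one]]
      ring
    have e2 : μ₂ * A₂ ^ e * B₂ ^ (1 + k) = (μ₂ * A₂ ^ (e + k) * B₂) * (B₂ / A₂) ^ k := by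
      have hk : A₂ ^ k * (B₂ / A₂) ^ k = B₂ ^ k := by rw [← mul_pow, mul_div_cancel₀ _ hA₂']
      rw [show B₂ ^ (1 + k) = B₂ * (A₂ ^ k * (B₂ / A₂) ^ k) by rw [hk, pow_add, pow_one]]
      ring
    rw [e1, e2, h2, ← hCe]
    ring
  have hr0 : 0 ≤ μ₁ * A₁ ^ (d - 0) * B₁ ^ 0 + μ₂ * A₂ ^ (d - 0) * B₂ ^ 0 := by positivity
  rcases le_total (-y) x with hcase | hcase
  · left
    intro j hjd
    rcases Nat.eq_zero_or_pos j with rfl | hj1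
    · exact hr0
    · rw [hid j hj1 hjd]
      apply mul_nonneg hC0
      have h1 : y ^ (j-1) ≤ (-y) ^ (j-1) := by
        rcases Nat.even_or_odd (j-1) with he | ho
        · rw [he.neg_pow]
        · have hyk : y ^ (j-1) ≤ 0 := ho.pow_nonpos (by linarith)
          rw [ho.neg_pow]
          linarith
      have h2 : (-y) ^ (j-1) ≤ x ^ (j-1) := pow_le_pow_left₀ hy0 hcase _
      linarith
  · right
    intro j hjd
    constructor
    · intro hje
      rcases Nat.eq_zero_or_pos j with rfl | hj1
      · exact hr0
      · rw [hid j hj1 hjd]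
        apply mul_nonneg hC0
        have ho : Odd (j - 1) := by
          rcases hje with ⟨m, hm⟩
          refine ⟨m - 1, by omega⟩
        rw [sub_nonneg]
        have h1 : y ^ (j-1) ≤ 0 := ho.pow_nonpos (by linarith)
        have h2 : 0 ≤ x ^ (j-1) := pow_nonneg hx0 _
        linarith
    · intro hjo
      have hj1 : 1 ≤ j := hjo.pos
      rw [hid j hj1 hjd]
      apply mul_nonpos_of_nonneg_of_nonpos hC0
      have he : Even (j - 1) := by
        rcases hjo with ⟨m, hm⟩
        exact ⟨m, by omega⟩
      rw [sub_nonpos]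
      have := pow_le_pow_left₀ hx0 hcase (j-1)
      rwa [he.neg_pow] at this

theorem stmt_14 (d : ℕ) (hd : 1 ≤ d) (μ₁ μ₂ a₁ a₂ b₁ b₂ : ℝ)
    (hμ₁ : 0 < μ₁) (hμ₂ : 0 < μ₂) (ha₁ : 0 < a₁) (ha₂ : 0 < a₂)
    (hb₁ : 0 < b₁) (hb₂ : 0 < b₂) (t₀ : ℝ) (ht₀ : t₀ ∈ Set.Icc 0 (π / 2))
    (hmax : ∀ t ∈ Set.Icc (0 : ℝ) (π / 2),
      μ₁ * (a₁ * cos t + b₁ * sin t) ^ d + μ₂ * (a₂ * cos t + b₂ * sin t) ^ d ≤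
        μ₁ * (a₁ * cos t₀ + b₁ * sin t₀) ^ d + μ₂ * (a₂ * cos t₀ + b₂ * sin t₀) ^ d) :
    (μ₁ * (a₁ * cos t₀ + b₁ * sin t₀) ^ (d - 1) * (b₁ * cos t₀ - a₁ * sin t₀) +
      μ₂ * (a₂ * cos t₀ + b₂ * sin t₀) ^ (d - 1) * (b₂ * cos t₀ - a₂ * sin t₀) = 0) ∧
    ((∀ j ≤ d, 0 ≤ μ₁ * (a₁ * cos t₀ + b₁ * sin t₀) ^ (d - j) * (b₁ * cos t₀ - a₁ * sin t₀) ^ j +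
        μ₂ * (a₂ * cos t₀ + b₂ * sin t₀) ^ (d - j) * (b₂ * cos t₀ - a₂ * sin t₀) ^ j) ∨
     (∀ j ≤ d,
        (Even j → 0 ≤ μ₁ * (a₁ * cos t₀ + b₁ * sin t₀) ^ (d - j) *
            (b₁ * cos t₀ - a₁ * sin t₀) ^ j +
          μ₂ * (a₂ * cos t₀ + b₂ * sin t₀) ^ (d - j) * (b₂ * cos t₀ - a₂ * sin t₀) ^ j) ∧
        (Odd j → μ₁ * (a₁ * cos t₀ + b₁ * sin t₀) ^ (d - j) *
            (b₁ * cos t₀ - a₁ * sin t₀) ^ j +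
          μ₂ * (a₂ * cos t₀ + b₂ * sin t₀) ^ (d - j) * (b₂ * cos t₀ - a₂ * sin t₀) ^ j ≤ 0))) := by
  have hπ : (1:ℝ) ≤ π / 2 := by nlinarith [Real.pi_gt_three]
  set f : ℝ → ℝ := fun t =>
    μ₁ * (a₁ * cos t + b₁ * sin t) ^ d + μ₂ * (a₂ * cos t + b₂ * sin t) ^ d with hf_def
  have hf : ∀ t : ℝ, HasDerivAt f
      ((d : ℝ) * (μ₁ * (a₁ * cos t + b₁ * sin t) ^ (d - 1) * (b₁ * cos t - a₁ * sin t) +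
        μ₂ * (a₂ * cos t + b₂ * sin t) ^ (d - 1) * (b₂ * cos t - a₂ * sin t))) t := by
    intro t
    have h1 : HasDerivAt (fun t => a₁ * cos t + b₁ * sin t) (b₁ * cos t - a₁ * sin t) t := by
      have := ((Real.hasDerivAt_cos t).const_mul a₁).add ((Real.hasDerivAt_sin t).const_mul b₁)
      exact this.congr_deriv (by ring)
    have h2 : HasDerivAt (fun t => a₂ * cos t + b₂ * sin t) (b₂ * cos t - a₂ * sin t) t := by
      have := ((Real.hasDerivAt_cos t).const_mul a₂).add ((Real.hasDerivAt_sin t).const_mul b₂)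
      exact this.congr_deriv (by ring)
    have := ((h1.pow d).const_mul μ₁).add ((h2.pow d).const_mul μ₂)
    exact this.congr_deriv (by ring)
  have hmax2 : IsMaxOn f (Set.Icc 0 (π / 2)) t₀ := fun t ht => hmax t ht
  have hr1 : μ₁ * (a₁ * cos t₀ + b₁ * sin t₀) ^ (d - 1) * (b₁ * cos t₀ - a₁ * sin t₀) +
      μ₂ * (a₂ * cos t₀ + b₂ * sin t₀) ^ (d - 1) * (b₂ * cos t₀ - a₂ * sin t₀) = 0 := by
    obtain ⟨ht0, ht1⟩ := ht₀
    rcases eq_or_lt_of_le ht0 with h0 | h0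
    · -- t₀ = 0 : contradiction
      exfalso
      subst h0
      have hy : (1:ℝ) ∈ posTangentConeAt (Set.Icc (0:ℝ) (π/2)) 0 := by
        apply mem_posTangentConeAt_of_segment_subset
        rw [zero_add, segment_eq_Icc (by norm_num : (0:ℝ) ≤ 1)]
        exact Set.Icc_subset_Icc le_rfl hπ
      have hloc : IsLocalMaxOn f (Set.Icc (0:ℝ) (π/2)) 0 :=
        hmax2.filter_mono inf_le_right
      have := hloc.hasFDerivWithinAt_nonpos (hf 0).hasDerivWithinAt hy
      simp only [ContinuousLinearMap.toSpanSingleton_apply, ContinuousLinearMap.smulRight_apply, ContinuousLinearMap.one_apply,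
        one_smul, smul_eq_mul, Real.cos_zero, Real.sin_zero] at this
      have hdpos : (0:ℝ) < d := by exact_mod_cast hd
      nlinarith [mul_pos (mul_pos hμ₁ (pow_pos (by linarith : (0:ℝ) < a₁ * 1 + b₁ * 0) (d-1))) (show (0:ℝ) < b₁ * 1 - a₁ * 0 by linarith),
        mul_pos (mul_pos hμ₂ (pow_pos (by linarith : (0:ℝ) < a₂ * 1 + b₂ * 0) (d-1))) (show (0:ℝ) < b₂ * 1 - a₂ * 0 by linarith)]
    rcases eq_or_lt_of_le ht1 with h1 | h1
    · -- t₀ = π/2 : contradiction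
      exfalso
      have hy : (-1:ℝ) ∈ posTangentConeAt (Set.Icc (0:ℝ) (π/2)) (π/2) := by
        apply mem_posTangentConeAt_of_segment_subset
        have : π/2 + (-1) ≤ π/2 := by linarith
        rw [segment_symm, segment_eq_Icc this]
        exact Set.Icc_subset_Icc (by linarith) le_rfl
      subst h1
      have hloc : IsLocalMaxOn f (Set.Icc (0:ℝ) (π/2)) (π/2) :=
        hmax2.filter_mono inf_le_right
      have := hloc.hasFDerivWithinAt_nonpos (hf (π/2)).hasDerivWithinAt hy
      simp only [ContinuousLinearMap.toSpanSingleton_apply, ContinuousLinearMap.smulRight_apply, ContinuousLinearMap.one_apply,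
        smul_eq_mul, Real.cos_pi_div_two, Real.sin_pi_div_two] at this
      have hdpos : (0:ℝ) < d := by exact_mod_cast hd
      nlinarith [mul_pos (mul_pos hμ₁ (pow_pos (by linarith : (0:ℝ) < a₁ * 0 + b₁ * 1) (d-1))) ha₁,
        mul_pos (mul_pos hμ₂ (pow_pos (by linarith : (0:ℝ) < a₂ * 0 + b₂ * 1) (d-1))) ha₂]
    · -- interior point
      have hloc : IsLocalMax f t₀ := hmax2.isLocalMax (Icc_mem_nhds h0 h1)
      have hz := hloc.hasDerivAt_eq_zero (hf t₀)
      have hdne : (d:ℝ) ≠ 0 := by positivity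
      exact (mul_eq_zero.mp hz).resolve_left hdne
  refine ⟨hr1, ?_⟩
  obtain ⟨ht0, ht1⟩ := ht₀
  have hcos : 0 ≤ cos t₀ := Real.cos_nonneg_of_mem_Icc ⟨by linarith [Real.pi_pos], ht1⟩
  have hsin : 0 ≤ sin t₀ := Real.sin_nonneg_of_nonneg_of_le_pi ht0 (by linarith [Real.pi_pos])
  have hsc : sin t₀ ^ 2 + cos t₀ ^ 2 = 1 := Real.sin_sq_add_cos_sq t₀
  have hpos : 0 < cos t₀ ∨ 0 < sin t₀ := by
    by_contra h
    push_neg at h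
    nlinarith [h.1, h.2]
  have posA : ∀ a b : ℝ, 0 < a → 0 < b → 0 < a * cos t₀ + b * sin t₀ := by
    intro a b ha hb
    rcases hpos with h | h
    · nlinarith [mul_nonneg hb.le hsin]
    · nlinarith [mul_nonneg ha.le hcos]
  have hA₁ : 0 < a₁ * cos t₀ + b₁ * sin t₀ := posA _ _ ha₁ hb₁
  have hA₂ : 0 < a₂ * cos t₀ + b₂ * sin t₀ := posA _ _ ha₂ hb₂
  rcases le_total 0 (b₁ * cos t₀ - a₁ * sin t₀) with hB | hB
  · exact key_alg d hd μ₁ μ₂ _ _ _ _ hμ₁ hμ₂ hA₁ hA₂ hB hr1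
  · have h1 : 0 ≤ μ₂ * (a₂ * cos t₀ + b₂ * sin t₀) ^ (d-1) * (b₂ * cos t₀ - a₂ * sin t₀) := by
      nlinarith [mul_nonneg (mul_nonneg hμ₁.le (pow_pos hA₁ (d-1)).le) (neg_nonneg.2 hB)]
    have hB₂ : 0 ≤ b₂ * cos t₀ - a₂ * sin t₀ := by
      by_contra hc
      push_neg at hc
      nlinarith [mul_pos (mul_pos hμ₂ (pow_pos hA₂ (d-1))) (neg_pos.2 hc)]
    have key := key_alg d hd μ₂ μ₁ (a₂ * cos t₀ + b₂ * sin t₀) (a₁ * cos t₀ + b₁ * sin t₀)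
      (b₂ * cos t₀ - a₂ * sin t₀) (b₁ * cos t₀ - a₁ * sin t₀) hμ₂ hμ₁ hA₂ hA₁ hB₂ (by linarith)
    rcases key with h | h
    · left; intro j hj; have := h j hj; linarith
    · right; intro j hj
      obtain ⟨he, ho⟩ := h j hj
      exact ⟨fun hje => by linarith [he hje], fun hjo => by linarith [ho hjo]⟩
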